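/- Let M ≥ 1 be an integer, B a complex Banach space, r₀ > 0, and v : Δ → B a holomorphic function on the disc Δ = {z ∈ ℂ : |z| < r₀}. Then there exists a unique tuple (u, E₀, …, E_{M−2}) consisting of a holomorphic function u : Δ → B and constants E₀, …, E_{M−2} ∈ B such that (z^M/2)·u'(z) + (M/4)·z^{M−1}·u(z) = E₀ + z·E₁ + … + z^{M−2}·E_{M−2} + v(z) for all z ∈ Δ. Moreover, for every r with 0 < r < r₀: ‖E_j‖_B ≤ r^{−j}·‖v‖_{B(r)} for j = 0,…,M−2; ‖u‖_{B(r)} ≤ 4·r^{1−M}·‖v‖_{B(r)}; and ‖u'‖_{B(r)} ≤ 2·r^{−M}·‖v‖_{B(r)}. -/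

import Mathlib

open scoped ENNReal
open scoped NNReal

/-- The `j`-th Taylor coefficient at `0` of a `B`-valued function. -/
noncomputable def taylorCoeff {B : Type*} [NormedAddCommGroup B] [NormedSpace ℂ B]
    (w : ℂ → B) (j : ℕ) : B :=
  (1 / (Nat.factorial j : ℂ)) • iteratedDeriv j w 0

/-- `‖w‖_{B(r)} := Σ_{j≥0} ‖w_j‖·r^j ∈ [0,∞]` where `w_j` are the Taylor coefficients
of `w` at `0`. -/
noncomputable def bNorm {B : Type*} [NormedAddCommGroup B] [NormedSpace ℂ B]
    (w : ℂ → B) (r : ℝ) : ℝ≥0∞ :=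
  ∑' j : ℕ, (‖taylorCoeff w j‖₊ : ℝ≥0∞) * (ENNReal.ofReal r) ^ j

section Aux

open FormalMultilinearSeries

variable {B : Type*} [NormedAddCommGroup B] [NormedSpace ℂ B] [CompleteSpace B]

/-- The one-dimensional formal power series with coefficients `c`. -/
noncomputable def coeffSeries (c : ℕ → B) : FormalMultilinearSeries ℂ ℂ B :=
  fun n => ContinuousMultilinearMap.mkPiRing ℂ (Fin n) (c n)

omit [CompleteSpace B] in
lemma coeffSeries_coeff (c : ℕ → B) (n : ℕ) : (coeffSeries c).coeff n = c n := by
  simp [coeffSeries, FormalMultilinearSeries.coeff, ContinuousMultilinearMap.mkPiRing_apply]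

omit [CompleteSpace B] in
lemma coeffSeries_norm (c : ℕ → B) (n : ℕ) : ‖coeffSeries c n‖ = ‖c n‖ :=
  ContinuousMultilinearMap.norm_mkPiRing (c n)

lemma taylorCoeff_eq {f : ℂ → B} {p : FormalMultilinearSeries ℂ ℂ B} {r : ℝ≥0∞}
    (h : HasFPowerSeriesOnBall f p 0 r) (n : ℕ) : taylorCoeff f n = p.coeff n := by
  have h1 := h.factorial_smul (1 : ℂ) n
  rw [taylorCoeff, iteratedDeriv_eq_iteratedFDeriv, ← h1]
  have h2 : (p n fun _ => (1 : ℂ)) = p.coeff n := rfl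
  rw [h2, ← Nat.cast_smul_eq_nsmul ℂ, smul_smul, one_div,
    inv_mul_cancel₀ (by exact_mod_cast n.factorial_ne_zero), one_smul]

lemma deriv_series {f : ℂ → B} {p : FormalMultilinearSeries ℂ ℂ B} {r : ℝ≥0∞}
    (h : HasFPowerSeriesOnBall f p 0 r) :
    ∃ pd : FormalMultilinearSeries ℂ ℂ B,
      HasFPowerSeriesOnBall (deriv f) pd 0 r ∧
        ∀ n, pd.coeff n = (n + 1 : ℕ) • p.coeff (n + 1) := by
  refine ⟨(ContinuousLinearMap.apply ℂ B (1 : ℂ)).compFormalMultilinearSeries p.derivSeries,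
    ?_, ?_⟩
  · have h2 := (ContinuousLinearMap.apply ℂ B (1 : ℂ)).comp_hasFPowerSeriesOnBall h.fderiv
    have h3 : deriv f = (ContinuousLinearMap.apply ℂ B (1 : ℂ)) ∘ (fderiv ℂ f) := by
      funext z; rfl
    rw [h3]; exact h2
  · intro n
    have h3 := p.derivSeries_apply_diag n (1 : ℂ)
    simp only [FormalMultilinearSeries.coeff,
      ContinuousLinearMap.compFormalMultilinearSeries_apply,
      ContinuousLinearMap.compContinuousMultilinearMap_coe, Function.comp_apply,
      ContinuousLinearMap.apply_apply]
    show (p.derivSeries n) (fun _ => (1 : ℂ)) 1 = _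
    rw [h3]
    rfl

lemma hasSum_ode {f : ℂ → B} {p pd : FormalMultilinearSeries ℂ ℂ B} {R : ℝ≥0∞} {M N : ℕ}
    (hMN : M = N + 1)
    (hf : HasFPowerSeriesOnBall f p 0 R)
    (hd : HasFPowerSeriesOnBall (deriv f) pd 0 R)
    (hpd : ∀ n, pd.coeff n = (n + 1 : ℕ) • p.coeff (n + 1))
    {z : ℂ} (hz : z ∈ Metric.eball (0 : ℂ) R) :
    HasSum (fun k : ℕ => ((k : ℂ) / 2 + (M : ℂ) / 4) • (z ^ (k + N) • p.coeff k))
      ((z ^ M / 2) • deriv f z + ((M : ℂ) / 4 * z ^ N) • f z) := by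
  have hs1 : HasSum (fun n : ℕ => z ^ n • pd.coeff n) (deriv f z) := by
    have h1 := hd.hasSum hz
    rw [zero_add] at h1
    simpa only [FormalMultilinearSeries.apply_eq_pow_smul_coeff] using h1
  have hs0 : HasSum (fun n : ℕ => z ^ n • p.coeff n) (f z) := by
    have h1 := hf.hasSum hz
    rw [zero_add] at h1
    simpa only [FormalMultilinearSeries.apply_eq_pow_smul_coeff] using h1
  set G : ℕ → B := fun k => ((k : ℂ) / 2) • (z ^ (k + N) • p.coeff k) with hG
  have hA : HasSum G ((z ^ M / 2) • deriv f z) := by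
    have h1 := hs1.const_smul (z ^ M / 2)
    have h2 : (fun k : ℕ => (z ^ M / 2) • (z ^ k • pd.coeff k)) = fun k => G (k + 1) := by
      funext k
      rw [hG, hpd, ← Nat.cast_smul_eq_nsmul ℂ]
      simp only [smul_smul]
      congr 1
      push_cast [hMN]
      ring
    rw [h2] at h1
    have h3 := (hasSum_nat_add_iff (f := G) 1).mp h1
    simpa [hG] using h3
  have hB : HasSum (fun k : ℕ => ((M : ℂ) / 4) • (z ^ (k + N) • p.coeff k))
      (((M : ℂ) / 4 * z ^ N) • f z) := by
    have h1 := hs0.const_smul ((M : ℂ) / 4 * z ^ N)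
    have h2 : (fun k : ℕ => ((M : ℂ) / 4 * z ^ N) • (z ^ k • p.coeff k)) =
        fun k : ℕ => ((M : ℂ) / 4) • (z ^ (k + N) • p.coeff k) := by
      funext k
      rw [smul_smul, smul_smul]
      congr 1
      rw [pow_add]
      ring
    rwa [h2] at h1
  have hAB := hA.add hB
  have h2 : (fun k : ℕ => G k + ((M : ℂ) / 4) • (z ^ (k + N) • p.coeff k)) =
      fun k : ℕ => ((k : ℂ) / 2 + (M : ℂ) / 4) • (z ^ (k + N) • p.coeff k) := by
    funext k
    rw [hG, ← add_smul]
  rwa [h2] at hAB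

lemma exists_hasFPowerSeriesOnBall_of_differentiableOn {f : ℂ → B} {R : ℝ≥0} (hR : 0 < R)
    (hf : DifferentiableOn ℂ f (Metric.ball (0 : ℂ) (R : ℝ))) :
    ∃ p : FormalMultilinearSeries ℂ ℂ B, HasFPowerSeriesOnBall f p 0 (R : ℝ≥0∞) := by
  have key : ∀ r' : ℝ≥0, 0 < r' → r' < R →
      HasFPowerSeriesOnBall f (cauchyPowerSeries f 0 r') 0 r' := by
    intro r' h1 h2
    exact (hf.mono (Metric.closedBall_subset_ball (by exact_mod_cast h2))).hasFPowerSeriesOnBall h1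
  have hr10 : 0 < R / 2 := by positivity
  have hr1R : R / 2 < R := NNReal.half_lt_self hR.ne'
  have hbase := key (R / 2) hr10 hr1R
  refine ⟨cauchyPowerSeries f 0 (R / 2), ?_, by exact_mod_cast hR, ?_⟩
  · refine ENNReal.le_of_forall_nnreal_lt fun r' hr' => ?_
    rcases eq_or_ne r' 0 with rfl | h0
    · simp
    have h2 : r' < R := by exact_mod_cast hr'
    have h3 := key r' (pos_iff_ne_zero.mpr h0) h2
    have heq := h3.hasFPowerSeriesAt.eq_formalMultilinearSeries hbase.hasFPowerSeriesAt
    rw [heq] at h3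
    exact h3.r_le
  · intro y hy
    rw [Metric.mem_eball, edist_nndist, nndist_eq_nnnorm, sub_zero] at hy
    have h1 : ‖y‖₊ < R := by exact_mod_cast hy
    obtain ⟨r', h2, h3⟩ := exists_between h1
    have h0 : 0 < r' := lt_of_le_of_lt zero_le h2
    have hb := key r' h0 h3
    have heq := hb.hasFPowerSeriesAt.eq_formalMultilinearSeries hbase.hasFPowerSeriesAt
    have h4 := hb.hasSum (y := y) (by rw [Metric.mem_eball, edist_nndist, nndist_eq_nnnorm, sub_zero]; exact_mod_cast h2)
    rwa [heq] at h4

lemma coeff_zero_of_hasSum_zero {R : ℝ≥0∞} (hR : 0 < R) {W : ℕ → B}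
    (h : ∀ z ∈ Metric.eball (0 : ℂ) R, HasSum (fun n : ℕ => z ^ n • W n) 0) :
    ∀ n, W n = 0 := by
  have hrad : R ≤ (coeffSeries W).radius := by
    refine ENNReal.le_of_forall_nnreal_lt fun r' hr' => ?_
    have hz : ((r' : ℝ) : ℂ) ∈ Metric.eball (0 : ℂ) R := by
      rw [Metric.mem_eball, edist_nndist, nndist_eq_nnnorm, sub_zero]
      have h4 : ‖((r' : ℝ) : ℂ)‖₊ = r' := by
        apply NNReal.coe_injective
        rw [coe_nnnorm, Complex.norm_real, Real.norm_eq_abs, abs_of_nonneg r'.coe_nonneg]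
      rw [h4]
      exact hr'
    have hsum := (h _ hz).summable
    have htend := hsum.tendsto_atTop_zero
    have htend2 : Filter.Tendsto (fun n : ℕ => ‖coeffSeries W n‖ * (r' : ℝ) ^ n)
        Filter.atTop (nhds 0) := by
      have h5 := htend.norm
      rw [norm_zero] at h5
      convert h5 using 2 with n
      rw [coeffSeries_norm, norm_smul, norm_pow, Complex.norm_real, Real.norm_eq_abs,
        abs_of_nonneg r'.coe_nonneg, mul_comm]
    exact (coeffSeries W).le_radius_of_tendsto htend2
  have hzero : HasFPowerSeriesOnBall (fun _ : ℂ => (0 : B)) (coeffSeries W) 0 R :=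
    { r_le := hrad
      r_pos := hR
      hasSum := fun {y} hy => by
        have h2 := h y hy
        simp only [FormalMultilinearSeries.apply_eq_pow_smul_coeff, coeffSeries_coeff]
        exact h2 }
  have h6 := hzero.hasFPowerSeriesAt.eq_zero
  intro n
  have h3 := congrArg (fun p : FormalMultilinearSeries ℂ ℂ B => p.coeff n) h6
  have h7 : (0 : FormalMultilinearSeries ℂ ℂ B).coeff n = 0 := rfl
  simpa [coeffSeries_coeff, h7] using h3

end Aux

theorem stmt6 {B : Type*} [NormedAddCommGroup B] [NormedSpace ℂ B] [CompleteSpace B]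
    (M : ℕ) (hM : 1 ≤ M) (r₀ : ℝ) (hr₀ : 0 < r₀) (v : ℂ → B)
    (hv : DifferentiableOn ℂ v (Metric.ball (0 : ℂ) r₀)) :
    ∃ (u : ℂ → B) (E : ℕ → B),
      -- existence
      (DifferentiableOn ℂ u (Metric.ball (0 : ℂ) r₀) ∧
        ∀ z ∈ Metric.ball (0 : ℂ) r₀,
          (z ^ M / 2) • deriv u z + ((M : ℂ) / 4 * z ^ (M - 1)) • u z =
            (∑ j ∈ Finset.range (M - 1), z ^ j • E j) + v z) ∧
      -- uniqueness
      (∀ (u₂ : ℂ → B) (E₂ : ℕ → B),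
        (DifferentiableOn ℂ u₂ (Metric.ball (0 : ℂ) r₀) ∧
          ∀ z ∈ Metric.ball (0 : ℂ) r₀,
            (z ^ M / 2) • deriv u₂ z + ((M : ℂ) / 4 * z ^ (M - 1)) • u₂ z =
              (∑ j ∈ Finset.range (M - 1), z ^ j • E₂ j) + v z) →
        (∀ z ∈ Metric.ball (0 : ℂ) r₀, u₂ z = u z) ∧ ∀ j < M - 1, E₂ j = E j) ∧
      -- estimates
      (∀ r : ℝ, 0 < r → r < r₀ →
        (∀ j < M - 1, (‖E j‖₊ : ℝ≥0∞) ≤ bNorm v r / (ENNReal.ofReal r) ^ j) ∧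
        bNorm u r ≤ 4 * bNorm v r / (ENNReal.ofReal r) ^ (M - 1) ∧
        bNorm (deriv u) r ≤ 2 * bNorm v r / (ENNReal.ofReal r) ^ M) := by
  classical
  obtain ⟨N, hMN⟩ : ∃ N, M = N + 1 := ⟨M - 1, by omega⟩
  have hNM : M - 1 = N := by omega
  set R : ℝ≥0 := ⟨r₀, hr₀.le⟩ with hRdef
  have hRpos : 0 < R := hr₀
  have hRpos' : (0 : ℝ≥0∞) < (R : ℝ≥0∞) := by exact_mod_cast hRpos
  have hball : Metric.ball (0 : ℂ) r₀ = Metric.eball (0 : ℂ) (R : ℝ≥0∞) := by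
    rw [Metric.emetric_ball_nnreal]
    rfl
  obtain ⟨q, hq⟩ := exists_hasFPowerSeriesOnBall_of_differentiableOn hRpos hv
  set a : ℕ → B := fun n => q.coeff n with ha
  have hsc : ∀ k : ℕ, (2 * (k : ℂ) + M) ≠ 0 := by
    intro k
    have h1 : ((2 * k + M : ℕ) : ℂ) ≠ 0 := Nat.cast_ne_zero.mpr (by omega)
    push_cast at h1
    convert h1 using 2
  set c : ℕ → B := fun k => (4 / (2 * (k : ℂ) + M)) • a (k + N) with hc
  have hcnorm : ∀ k, ‖c k‖ ≤ 4 * ‖a (k + N)‖ := by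
    intro k
    rw [hc, norm_smul]
    have h1 : ‖(4 / (2 * (k : ℂ) + M))‖ ≤ 4 := by
      have h2 : (2 * (k : ℂ) + M) = ((2 * k + M : ℕ) : ℂ) := by push_cast; ring
      rw [norm_div, h2, Complex.norm_natCast]
      have h3 : (1 : ℝ) ≤ (2 * k + M : ℕ) := by exact_mod_cast (by omega : 1 ≤ 2 * k + M)
      have h4 : ‖(4 : ℂ)‖ = 4 := by norm_num
      rw [h4]
      exact div_le_self (by norm_num) h3
    exact mul_le_mul_of_nonneg_right h1 (norm_nonneg _)
  set pu := coeffSeries c with hpu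
  have hrad : (R : ℝ≥0∞) ≤ pu.radius := by
    refine ENNReal.le_of_forall_nnreal_lt fun r' hr' => ?_
    rcases eq_or_ne r' 0 with rfl | hr'0
    · simp
    have hr'pos : (0 : ℝ) < (r' : ℝ) := by positivity
    obtain ⟨C, hC0, hCb⟩ := q.norm_mul_pow_le_of_lt_radius (lt_of_lt_of_le hr' hq.r_le)
    apply pu.le_radius_of_bound (4 * C / (r' : ℝ) ^ N)
    intro n
    rw [hpu, coeffSeries_norm]
    calc ‖c n‖ * (r' : ℝ) ^ n ≤ (4 * ‖a (n + N)‖) * (r' : ℝ) ^ n :=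
          mul_le_mul_of_nonneg_right (hcnorm n) (pow_nonneg r'.coe_nonneg n)
      _ = 4 * (‖q (n + N)‖ * (r' : ℝ) ^ (n + N)) / (r' : ℝ) ^ N := by
          rw [q.norm_apply_eq_norm_coef, pow_add]
          field_simp
          ring
      _ ≤ 4 * C / (r' : ℝ) ^ N := by gcongr; exact hCb (n + N)
  set u := pu.sum with hudef
  have hu : HasFPowerSeriesOnBall u pu 0 R :=
    (pu.hasFPowerSeriesOnBall (lt_of_lt_of_le hRpos' hrad)).mono hRpos' hrad
  obtain ⟨pd, hd, hpd⟩ := deriv_series hu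
  set E : ℕ → B := fun j => -a j with hE
  -- existence equation
  have heq : ∀ z ∈ Metric.ball (0 : ℂ) r₀,
      (z ^ M / 2) • deriv u z + ((M : ℂ) / 4 * z ^ N) • u z =
        (∑ j ∈ Finset.range N, z ^ j • E j) + v z := by
    intro z hz
    rw [hball] at hz
    have hS := hasSum_ode hMN hu hd hpd hz
    have hfun : (fun k : ℕ => ((k : ℂ) / 2 + (M : ℂ) / 4) • (z ^ (k + N) • pu.coeff k)) =
        fun k : ℕ => z ^ (k + N) • a (k + N) := by
      funext k
      rw [hpu, coeffSeries_coeff, hc]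
      simp only [smul_smul]
      congr 1
      have h0 := hsc k
      have h0' : (k : ℂ) * 2 + M ≠ 0 := by rwa [mul_comm]
      field_simp
      ring
    rw [hfun] at hS
    have hS2 := (hasSum_nat_add_iff (f := fun n : ℕ => z ^ n • a n) N).mp hS
    have hv' : HasSum (fun n : ℕ => z ^ n • a n) (v z) := by
      have h1 := hq.hasSum hz
      rw [zero_add] at h1
      simpa only [FormalMultilinearSeries.apply_eq_pow_smul_coeff] using h1
    have hveq := hv'.unique hS2
    have hEsum : (∑ j ∈ Finset.range N, z ^ j • E j) =
        -∑ j ∈ Finset.range N, z ^ j • a j := by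
      rw [← Finset.sum_neg_distrib]
      exact Finset.sum_congr rfl fun j _ => by rw [hE, smul_neg]
    rw [hEsum, hveq]
    abel
  refine ⟨u, E, ⟨?_, ?_⟩, ?_, ?_⟩
  · rw [hball]
    exact hu.differentiableOn
  · intro z hz
    rw [hNM]
    exact heq z hz
  · -- uniqueness
    rintro u₂ E₂ ⟨hdiff₂, heq₂'⟩
    simp only [hNM] at heq₂'
    obtain ⟨q₂, hq₂⟩ := exists_hasFPowerSeriesOnBall_of_differentiableOn hRpos hdiff₂
    obtain ⟨pd₂, hd₂, hpd₂⟩ := deriv_series hq₂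
    set b : ℕ → B := fun k => q₂.coeff k - pu.coeff k with hb
    set F : ℕ → B := fun j => E₂ j - E j with hF
    set W : ℕ → B := fun n =>
      if n < N then -F n else (((n - N : ℕ) : ℂ) / 2 + (M : ℂ) / 4) • b (n - N) with hW
    have hWsum : ∀ z ∈ Metric.eball (0 : ℂ) (R : ℝ≥0∞),
        HasSum (fun n : ℕ => z ^ n • W n) 0 := by
      intro z hz
      have hzm : z ∈ Metric.ball (0 : ℂ) r₀ := by rw [hball]; exact hz
      have hS₂ := hasSum_ode hMN hq₂ hd₂ hpd₂ hz
      have hS₁ := hasSum_ode hMN hu hd hpd hz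
      have hsub := hS₂.sub hS₁
      have hval : ((z ^ M / 2) • deriv u₂ z + ((M : ℂ) / 4 * z ^ N) • u₂ z) -
          ((z ^ M / 2) • deriv u z + ((M : ℂ) / 4 * z ^ N) • u z) =
          ∑ j ∈ Finset.range N, z ^ j • F j := by
        rw [heq₂' z hzm, heq z hzm]
        have h1 : ∀ S₂ S₁ w : B, (S₂ + w) - (S₁ + w) = S₂ - S₁ := by intros; abel
        rw [h1, ← Finset.sum_sub_distrib]
        exact Finset.sum_congr rfl fun j _ => by rw [hF, smul_sub]
      rw [hval] at hsub
      have hterm : (fun k : ℕ =>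
          ((k : ℂ) / 2 + (M : ℂ) / 4) • (z ^ (k + N) • q₂.coeff k) -
            ((k : ℂ) / 2 + (M : ℂ) / 4) • (z ^ (k + N) • pu.coeff k)) =
          fun k : ℕ => ((k : ℂ) / 2 + (M : ℂ) / 4) • (z ^ (k + N) • b k) := by
        funext k
        rw [hb, ← smul_sub, ← smul_sub]
      rw [hterm] at hsub
      have h1 : HasSum (fun n : ℕ => z ^ n •
          (if n < N then (0 : B) else (((n - N : ℕ) : ℂ) / 2 + (M : ℂ) / 4) • b (n - N)))
          (∑ j ∈ Finset.range N, z ^ j • F j) := by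
        refine (Function.Injective.hasSum_iff (g := fun k : ℕ => k + N)
          (add_left_injective N) ?_).mp ?_
        · intro n hn
          simp only [Set.mem_range, not_exists] at hn
          have hnN : n < N := by
            by_contra hcon
            exact hn (n - N) (by omega)
          rw [if_pos hnN, smul_zero]
        · convert hsub using 1
          funext k
          show z ^ (k + N) • (if k + N < N then (0 : B)
              else (((k + N - N : ℕ) : ℂ) / 2 + (M : ℂ) / 4) • b (k + N - N)) = _
          rw [if_neg (by omega), Nat.add_sub_cancel, smul_comm]
      have h2 : HasSum (fun n : ℕ => z ^ n • (if n < N then F n else (0 : B)))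
          (∑ j ∈ Finset.range N, z ^ j • F j) := by
        have h3 := hasSum_sum_of_ne_finset_zero (L := SummationFilter.unconditional ℕ) (s := Finset.range N)
          (f := fun n : ℕ => z ^ n • (if n < N then F n else (0 : B)))
          (by
            intro m hm
            show z ^ m • (if m < N then F m else (0 : B)) = 0
            rw [if_neg (by simpa using hm), smul_zero])
        have h4 : (∑ j ∈ Finset.range N, z ^ j • (if j < N then F j else (0 : B))) =
            ∑ j ∈ Finset.range N, z ^ j • F j :=
          Finset.sum_congr rfl fun j hj => by rw [if_pos (Finset.mem_range.mp hj)]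
        rwa [h4] at h3
      have hdiff := h1.sub h2
      rw [sub_self] at hdiff
      convert hdiff using 1
      funext n
      rw [← smul_sub]
      congr 1
      show (if n < N then -F n else (((n - N : ℕ) : ℂ) / 2 + (M : ℂ) / 4) • b (n - N)) = _
      split_ifs with h
      · rw [zero_sub]
      · rw [sub_zero]
    have hWzero := coeff_zero_of_hasSum_zero hRpos' hWsum
    have hscne : ∀ n : ℕ, ((n : ℂ) / 2 + (M : ℂ) / 4) ≠ 0 := by
      intro n
      have h1 : ((n : ℂ) / 2 + (M : ℂ) / 4) = (2 * n + M) / 4 := by ring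
      rw [h1]
      exact div_ne_zero (hsc n) (by norm_num)
    have hc2 : ∀ n, q₂.coeff n = pu.coeff n := by
      intro n
      have h1 := hWzero (n + N)
      rw [hW] at h1
      simp only [if_neg (by omega : ¬ n + N < N), Nat.add_sub_cancel] at h1
      have h2 := (smul_eq_zero.mp h1).resolve_left (hscne n)
      rw [hb] at h2
      exact sub_eq_zero.mp h2
    constructor
    · intro z hz
      rw [hball] at hz
      have hsum₂ : HasSum (fun n : ℕ => z ^ n • q₂.coeff n) (u₂ z) := by
        have h1 := hq₂.hasSum hz
        rw [zero_add] at h1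
        simpa only [FormalMultilinearSeries.apply_eq_pow_smul_coeff] using h1
      have hsum₁ : HasSum (fun n : ℕ => z ^ n • pu.coeff n) (u z) := by
        have h1 := hu.hasSum hz
        rw [zero_add] at h1
        simpa only [FormalMultilinearSeries.apply_eq_pow_smul_coeff] using h1
      have h5 : (fun n : ℕ => z ^ n • q₂.coeff n) = fun n : ℕ => z ^ n • pu.coeff n := by
        funext n; rw [hc2]
      rw [h5] at hsum₂
      exact hsum₂.unique hsum₁
    · intro j hj
      rw [hNM] at hj
      have h1 := hWzero j
      simp only [hW] at h1
      rw [if_pos hj] at h1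
      have h2 : F j = 0 := by simpa using h1
      rw [hF] at h2
      exact sub_eq_zero.mp h2
  · -- estimates
    intro r hr hrr₀
    set ρ : ℝ≥0∞ := ENNReal.ofReal r with hρ
    have hρ0 : ρ ≠ 0 := (ENNReal.ofReal_pos.mpr hr).ne'
    have hρtop : ρ ≠ ⊤ := ENNReal.ofReal_ne_top
    have hbv : bNorm v r = ∑' n : ℕ, (‖a n‖₊ : ℝ≥0∞) * ρ ^ n :=
      tsum_congr fun n => by rw [taylorCoeff_eq hq]
    have hbu : bNorm u r = ∑' n : ℕ, (‖c n‖₊ : ℝ≥0∞) * ρ ^ n :=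
      tsum_congr fun n => by rw [taylorCoeff_eq hu, hpu, coeffSeries_coeff]
    have hbd : bNorm (deriv u) r = ∑' n : ℕ, (‖pd.coeff n‖₊ : ℝ≥0∞) * ρ ^ n :=
      tsum_congr fun n => by rw [taylorCoeff_eq hd]
    have hc2 : ∀ k : ℕ, (‖c k‖₊ : ℝ≥0∞) ≤ 4 * (‖a (k + N)‖₊ : ℝ≥0∞) := by
      intro k
      have h1 : ‖c k‖₊ ≤ 4 * ‖a (k + N)‖₊ := by
        rw [← NNReal.coe_le_coe]
        push_cast
        exact hcnorm k
      exact_mod_cast h1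
    have hdnorm : ∀ k : ℕ, (‖pd.coeff k‖₊ : ℝ≥0∞) ≤ 2 * (‖a (k + M)‖₊ : ℝ≥0∞) := by
      intro k
      have h1 : ‖pd.coeff k‖ ≤ 2 * ‖a (k + M)‖ := by
        rw [hpd k, ← Nat.cast_smul_eq_nsmul ℂ, norm_smul, Complex.norm_natCast]
        rw [hpu, coeffSeries_coeff, hc, norm_smul]
        have h2 : (2 * ((k + 1 : ℕ) : ℂ) + M) = ((2 * (k + 1) + M : ℕ) : ℂ) := by
          push_cast; ring
        have h3 : ‖(4 / (2 * ((k + 1 : ℕ) : ℂ) + M))‖ = 4 / (2 * (k + 1) + M : ℕ) := by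
          rw [norm_div, h2, Complex.norm_natCast]
          norm_num
        rw [h3]
        have h4 : (k + 1 + N : ℕ) = k + M := by omega
        rw [h4]
        have h5 : ((k + 1 : ℕ) : ℝ) * (4 / ((2 * (k + 1) + M : ℕ) : ℝ)) ≤ 2 := by
          rw [mul_div_assoc']
          rw [div_le_iff₀ (by positivity)]
          push_cast
          nlinarith [Nat.one_le_cast (α := ℝ) |>.mpr hM]
        calc ((k + 1 : ℕ) : ℝ) * ((4 / ((2 * (k + 1) + M : ℕ) : ℝ)) * ‖a (k + M)‖) =
              (((k + 1 : ℕ) : ℝ) * (4 / ((2 * (k + 1) + M : ℕ) : ℝ))) * ‖a (k + M)‖ := by ring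
          _ ≤ 2 * ‖a (k + M)‖ := mul_le_mul_of_nonneg_right h5 (norm_nonneg _)
      have h6 : ‖pd.coeff k‖₊ ≤ 2 * ‖a (k + M)‖₊ := by
        rw [← NNReal.coe_le_coe]
        push_cast
        exact h1
      exact_mod_cast h6
    refine ⟨?_, ?_, ?_⟩
    · intro j hj
      rw [ENNReal.le_div_iff_mul_le (Or.inl (pow_ne_zero _ hρ0))
        (Or.inl (ENNReal.pow_ne_top hρtop))]
      have h1 : (‖E j‖₊ : ℝ≥0∞) = (‖a j‖₊ : ℝ≥0∞) := by rw [hE]; simp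
      rw [h1, hbv]
      exact ENNReal.le_tsum j
    · rw [hNM, ENNReal.le_div_iff_mul_le (Or.inl (pow_ne_zero _ hρ0))
        (Or.inl (ENNReal.pow_ne_top hρtop)), hbu]
      calc (∑' k : ℕ, (‖c k‖₊ : ℝ≥0∞) * ρ ^ k) * ρ ^ N
          = ∑' k : ℕ, (‖c k‖₊ : ℝ≥0∞) * ρ ^ (k + N) := by
            rw [← ENNReal.tsum_mul_right]
            exact tsum_congr fun k => by rw [pow_add, mul_assoc]
        _ ≤ ∑' k : ℕ, 4 * ((‖a (k + N)‖₊ : ℝ≥0∞) * ρ ^ (k + N)) :=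
            ENNReal.tsum_le_tsum fun k => by
              rw [← mul_assoc]
              exact mul_le_mul_left (hc2 k) _
        _ = 4 * ∑' k : ℕ, (‖a (k + N)‖₊ : ℝ≥0∞) * ρ ^ (k + N) := ENNReal.tsum_mul_left
        _ ≤ 4 * bNorm v r := by
            rw [hbv]
            exact mul_le_mul_right
              (ENNReal.tsum_comp_le_tsum_of_injective (add_left_injective N)
                (fun n : ℕ => (‖a n‖₊ : ℝ≥0∞) * ρ ^ n)) _
    · rw [ENNReal.le_div_iff_mul_le (Or.inl (pow_ne_zero _ hρ0))
        (Or.inl (ENNReal.pow_ne_top hρtop)), hbd]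
      calc (∑' k : ℕ, (‖pd.coeff k‖₊ : ℝ≥0∞) * ρ ^ k) * ρ ^ M
          = ∑' k : ℕ, (‖pd.coeff k‖₊ : ℝ≥0∞) * ρ ^ (k + M) := by
            rw [← ENNReal.tsum_mul_right]
            exact tsum_congr fun k => by rw [pow_add, mul_assoc]
        _ ≤ ∑' k : ℕ, 2 * ((‖a (k + M)‖₊ : ℝ≥0∞) * ρ ^ (k + M)) :=
            ENNReal.tsum_le_tsum fun k => by
              rw [← mul_assoc]
              exact mul_le_mul_left (hdnorm k) _
        _ = 2 * ∑' k : ℕ, (‖a (k + M)‖₊ : ℝ≥0∞) * ρ ^ (k + M) := ENNReal.tsum_mul_left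
        _ ≤ 2 * bNorm v r := by
            rw [hbv]
            exact mul_le_mul_right
              (ENNReal.tsum_comp_le_tsum_of_injective (add_left_injective M)
                (fun n : ℕ => (‖a n‖₊ : ℝ≥0∞) * ρ ^ n)) _
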